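/- The tracial geometric mean is monotone in each argument: if X ≤ X₁ and Y ≤ Y₁ in the Loewner order (all matrices positive semidefinite ℓ×ℓ complex), then tgm(X,Y) ≤ tgm(X₁,Y₁). -/

import Mathlib

open Matrix
open scoped ComplexOrder

namespace Matrix.PosSemidef

/-- The square root of a positive semidefinite matrix, as defined in the older Mathlib. -/
noncomputable def sqrt {𝕜 : Type*} [RCLike 𝕜] {n : Type*} [Fintype n] [DecidableEq n]
    {A : Matrix n n 𝕜} (hA : A.PosSemidef) : Matrix n n 𝕜 :=
  hA.1.eigenvectorUnitary.1 * diagonal ((↑) ∘ (√·) ∘ hA.1.eigenvalues) *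
  (star hA.1.eigenvectorUnitary : Matrix n n 𝕜)

lemma posSemidef_sqrt {𝕜 : Type*} [RCLike 𝕜] {n : Type*} [Fintype n] [DecidableEq n]
    {A : Matrix n n 𝕜} (hA : A.PosSemidef) : PosSemidef hA.sqrt := by
  apply PosSemidef.mul_mul_conjTranspose_same
  refine posSemidef_diagonal_iff.mpr fun i ↦ ?_
  rw [Function.comp_apply, RCLike.nonneg_iff]
  constructor
  · simp only [RCLike.ofReal_re]
    exact Real.sqrt_nonneg _
  · simp only [RCLike.ofReal_im]

lemma sqrt_mul_self {n : Type*} [Fintype n] [DecidableEq n]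
    {A : Matrix n n ℂ} (hA : A.PosSemidef) : hA.sqrt * hA.sqrt = A := by
  conv_rhs => rw [hA.1.spectral_theorem, Unitary.conjStarAlgAut_apply]
  have hU := Unitary.coe_star_mul_self hA.1.eigenvectorUnitary
  have hd : diagonal (((↑) ∘ (√·) ∘ hA.1.eigenvalues : n → ℂ))
      * diagonal ((↑) ∘ (√·) ∘ hA.1.eigenvalues)
      = diagonal (RCLike.ofReal ∘ hA.1.eigenvalues : n → ℂ) := by
    rw [diagonal_mul_diagonal]
    congr 1
    funext i
    simp only [Function.comp_apply]
    rw [← Complex.ofReal_mul, Real.mul_self_sqrt (hA.eigenvalues_nonneg i)]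
    rfl
  unfold sqrt
  rw [← hd]
  simp only [Matrix.mul_assoc]
  rw [← Matrix.mul_assoc _ (hA.1.eigenvectorUnitary : Matrix n n ℂ), hU, Matrix.one_mul]
  rfl

lemma sq_sqrt {n : Type*} [Fintype n] [DecidableEq n]
    {A : Matrix n n ℂ} (hA : A.PosSemidef) : hA.sqrt ^ 2 = A := by
  rw [pow_two, hA.sqrt_mul_self]

end Matrix.PosSemidef

section Aux

open Polynomial

variable {n : Type*} [Fintype n] [DecidableEq n]

lemma my_charpolyRev_mul_comm (A B : Matrix n n ℂ) :
    (A * B).charpolyRev = (B * A).charpolyRev := by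
  unfold Matrix.charpolyRev
  have h1 : ((A * B).map (C : ℂ →+* ℂ[X])) = A.map C * B.map C := Matrix.map_mul
  have h2 : ((B * A).map (C : ℂ →+* ℂ[X])) = B.map C * A.map C := Matrix.map_mul
  rw [h1, h2]
  calc det (1 - (X : ℂ[X]) • (A.map C * B.map C))
      = det (1 + (-((X : ℂ[X]) • A.map C)) * B.map C) := by
        rw [Matrix.neg_mul, Matrix.smul_mul, ← sub_eq_add_neg]
    _ = det (1 + B.map C * (-((X : ℂ[X]) • A.map C))) := Matrix.det_one_add_mul_comm _ _
    _ = det (1 - (X : ℂ[X]) • (B.map C * A.map C)) := by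
        rw [Matrix.mul_neg, Matrix.mul_smul, ← sub_eq_add_neg]

lemma my_charpoly_mul_comm (A B : Matrix n n ℂ) :
    (A * B).charpoly = (B * A).charpoly := by
  have hrev : (A * B).charpoly.reverse = (B * A).charpoly.reverse := by
    rw [Matrix.reverse_charpoly, Matrix.reverse_charpoly, my_charpolyRev_mul_comm]
  have hd1 : (A * B).charpoly.natDegree = Fintype.card n := Matrix.charpoly_natDegree_eq_dim _
  have hd2 : (B * A).charpoly.natDegree = Fintype.card n := Matrix.charpoly_natDegree_eq_dim _
  ext i
  rcases le_or_gt i (Fintype.card n) with hi | hi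
  · have h1 : (A * B).charpoly.coeff i = (A * B).charpoly.reverse.coeff (Fintype.card n - i) := by
      rw [Polynomial.reverse, hd1, Polynomial.coeff_reflect, Polynomial.revAt_le (by omega),
        Nat.sub_sub_self hi]
    have h2 : (B * A).charpoly.coeff i = (B * A).charpoly.reverse.coeff (Fintype.card n - i) := by
      rw [Polynomial.reverse, hd2, Polynomial.coeff_reflect, Polynomial.revAt_le (by omega),
        Nat.sub_sub_self hi]
    rw [h1, h2, hrev]
  · rw [Polynomial.coeff_eq_zero_of_natDegree_lt (by omega),
      Polynomial.coeff_eq_zero_of_natDegree_lt (by omega)]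

lemma my_trace_conj_diag (U : Matrix.unitaryGroup n ℂ) (d : n → ℂ) :
    ((U : Matrix n n ℂ) * diagonal d * (star U : Matrix n n ℂ)).trace = ∑ i, d i := by
  rw [Matrix.trace_mul_cycle, Matrix.mul_assoc, ← Matrix.mul_assoc,
    Unitary.coe_star_mul_self U, Matrix.one_mul, Matrix.trace_diagonal]

lemma my_charpoly_conj_diag [LinearOrder n] (U : Matrix.unitaryGroup n ℂ) (d : n → ℂ) :
    ((U : Matrix n n ℂ) * diagonal d * (star U : Matrix n n ℂ)).charpoly
      = ∏ i, (X - C (d i)) := by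
  have h : ((U : Matrix n n ℂ) * (diagonal d * (star U : Matrix n n ℂ))).charpoly
      = ((diagonal d * (star U : Matrix n n ℂ)) * (U : Matrix n n ℂ)).charpoly :=
    my_charpoly_mul_comm _ _
  rw [Matrix.mul_assoc, h, Matrix.mul_assoc, Unitary.coe_star_mul_self U, Matrix.mul_one]
  rw [Matrix.charpoly_of_upperTriangular _ (Matrix.blockTriangular_diagonal d)]
  simp [Matrix.diagonal_apply_eq]

lemma my_eig_roots [LinearOrder n] {A : Matrix n n ℂ} (hA : A.IsHermitian) :
    A.charpoly.roots = Finset.univ.val.map (fun i => (hA.eigenvalues i : ℂ)) := by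
  conv_lhs => rw [hA.spectral_theorem, Unitary.conjStarAlgAut_apply]
  rw [my_charpoly_conj_diag, Finset.prod_eq_multiset_prod]
  rw [show (Finset.univ.val.map fun i => (X : ℂ[X]) - C ((RCLike.ofReal ∘ hA.eigenvalues) i))
      = ((Finset.univ.val.map fun i => ((hA.eigenvalues i : ℂ))).map fun a => (X : ℂ[X]) - C a) by
    rw [Multiset.map_map]; rfl]
  rw [Polynomial.roots_multiset_prod_X_sub_C]

lemma my_trace_sqrt_re {A : Matrix n n ℂ} (hA : A.PosSemidef) :
    hA.sqrt.trace.re = ∑ i, Real.sqrt (hA.1.eigenvalues i) := by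
  rw [Matrix.PosSemidef.sqrt, my_trace_conj_diag, Complex.re_sum]
  simp

lemma my_trace_re_eq {A : Matrix n n ℂ} (hA : A.IsHermitian) :
    A.trace.re = ∑ i, hA.eigenvalues i := by
  conv_lhs => rw [hA.spectral_theorem, Unitary.conjStarAlgAut_apply]
  rw [my_trace_conj_diag, Complex.re_sum]
  simp

lemma my_trace_re_nonneg {A : Matrix n n ℂ} (hA : A.PosSemidef) : 0 ≤ A.trace.re := by
  rw [my_trace_re_eq hA.1]
  exact Finset.sum_nonneg fun i _ => hA.eigenvalues_nonneg i

lemma my_sqrt_mono {M N : Matrix n n ℂ} (hM : M.PosSemidef) (hN : N.PosSemidef)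
    (h : (N - M).PosSemidef) : (hN.sqrt - hM.sqrt).PosSemidef := by
  set S := hM.sqrt with hSdef
  set T := hN.sqrt with hTdef
  have hS : S.PosSemidef := hM.posSemidef_sqrt
  have hT : T.PosSemidef := hN.posSemidef_sqrt
  have hD : (T - S).IsHermitian := hT.isHermitian.sub hS.isHermitian
  simp only [hD.posSemidef_iff_eigenvalues_nonneg, Pi.le_def, Pi.zero_apply]
  intro i
  set μ : ℝ := hD.eigenvalues i with hμ
  set v : n → ℂ := ⇑(hD.eigenvectorBasis i) with hv
  have hvne : v ≠ 0 := by
    intro h0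
    apply hD.eigenvectorBasis.toBasis.ne_zero i
    ext j
    exact congrFun h0 j
  have hev : (T - S) *ᵥ v = μ • v := hD.mulVec_eigenvectorBasis i
  have key : N - M = (T - S) * T + S * (T - S) := by
    rw [Matrix.sub_mul, Matrix.mul_sub, ← pow_two, ← pow_two, hM.sq_sqrt, hN.sq_sqrt]
    abel
  have hq : star v ⬝ᵥ ((N - M) *ᵥ v)
      = μ • (star v ⬝ᵥ (T *ᵥ v)) + μ • (star v ⬝ᵥ (S *ᵥ v)) := by
    rw [key, Matrix.add_mulVec, dotProduct_add]
    congr 1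
    · rw [← Matrix.mulVec_mulVec, Matrix.dotProduct_mulVec,
        show star v ᵥ* (T - S) = star ((T - S) *ᵥ v) by rw [Matrix.star_mulVec, hD.eq],
        hev, star_smul, smul_dotProduct, Matrix.dotProduct_mulVec]
      simp [star_trivial]
    · rw [← Matrix.mulVec_mulVec, hev, Matrix.mulVec_smul, dotProduct_smul]
  have hpos := (Complex.nonneg_iff.mp (h.dotProduct_mulVec_nonneg v)).1
  rw [hq] at hpos
  have hTq := (Complex.nonneg_iff.mp (hT.dotProduct_mulVec_nonneg v)).1
  have hSq := (Complex.nonneg_iff.mp (hS.dotProduct_mulVec_nonneg v)).1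
  set a : ℝ := (star v ⬝ᵥ (T *ᵥ v)).re
  set b : ℝ := (star v ⬝ᵥ (S *ᵥ v)).re
  have hre : (μ • (star v ⬝ᵥ (T *ᵥ v)) + μ • (star v ⬝ᵥ (S *ᵥ v))).re = μ * (a + b) := by
    simp [Complex.real_smul, mul_add]
    rfl
  rw [hre] at hpos
  rcases eq_or_lt_of_le (by linarith : (0:ℝ) ≤ a + b) with h0 | h0
  · have ha : a = 0 := by linarith
    have hb : b = 0 := by linarith
    have hTz : T *ᵥ v = 0 := by
      rw [← hT.dotProduct_mulVec_zero_iff v]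
      have := hT.dotProduct_mulVec_nonneg v
      rw [Complex.nonneg_iff] at this
      exact Complex.ext (by simpa using ha) (by simpa using this.2.symm)
    have hSz : S *ᵥ v = 0 := by
      rw [← hS.dotProduct_mulVec_zero_iff v]
      have := hS.dotProduct_mulVec_nonneg v
      rw [Complex.nonneg_iff] at this
      exact Complex.ext (by simpa using hb) (by simpa using this.2.symm)
    have : μ • v = 0 := by
      rw [← hev, Matrix.sub_mulVec, hTz, hSz, sub_zero]
    rcases smul_eq_zero.mp this with h' | h'
    · exact le_of_eq h'.symm
    · exact absurd h' hvne
  · nlinarith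

end Aux

/-- The product `√X * Y * √X` is positive semidefinite. -/
theorem sqrt_mul_mul_sqrt_posSemidef {n : Type*} [Fintype n] [DecidableEq n]
    {X Y : Matrix n n ℂ} (hX : X.PosSemidef) (hY : Y.PosSemidef) :
    (hX.sqrt * Y * hX.sqrt).PosSemidef := by
  have h := hY.conjTranspose_mul_mul_same (B := hX.sqrt)
  rwa [hX.posSemidef_sqrt.isHermitian.eq] at h

/-- The tracial geometric mean `tgm(X,Y) = trace √(√X·Y·√X)`. -/
noncomputable def tgm {n : Type*} [Fintype n] [DecidableEq n]
    {X Y : Matrix n n ℂ} (hX : X.PosSemidef) (hY : Y.PosSemidef) : ℝ :=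
  ((sqrt_mul_mul_sqrt_posSemidef hX hY).sqrt.trace).re

section TgmLemmas

variable {n : Type*} [Fintype n] [DecidableEq n]

lemma my_tgm_mono_right {X Y Y₁ : Matrix n n ℂ}
    (hX : X.PosSemidef) (hY : Y.PosSemidef) (hY₁ : Y₁.PosSemidef)
    (hYle : (Y₁ - Y).PosSemidef) : tgm hX hY ≤ tgm hX hY₁ := by
  have hA := sqrt_mul_mul_sqrt_posSemidef hX hY
  have hA₁ := sqrt_mul_mul_sqrt_posSemidef hX hY₁
  have hsub : (hX.sqrt * Y₁ * hX.sqrt - hX.sqrt * Y * hX.sqrt).PosSemidef := by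
    have h := hYle.conjTranspose_mul_mul_same (B := hX.sqrt)
    rw [hX.posSemidef_sqrt.isHermitian.eq] at h
    have heq : hX.sqrt * (Y₁ - Y) * hX.sqrt
        = hX.sqrt * Y₁ * hX.sqrt - hX.sqrt * Y * hX.sqrt := by
      rw [Matrix.mul_sub, Matrix.sub_mul]
    rwa [heq] at h
  have hmono := my_sqrt_mono hA hA₁ hsub
  have htr := my_trace_re_nonneg hmono
  rw [Matrix.trace_sub, Complex.sub_re] at htr
  unfold tgm
  linarith

lemma my_sum_sqrt_eig_eq [LinearOrder n] {A B : Matrix n n ℂ}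
    (hA : A.IsHermitian) (hB : B.IsHermitian) (h : A.charpoly = B.charpoly) :
    ∑ i, Real.sqrt (hA.eigenvalues i) = ∑ i, Real.sqrt (hB.eigenvalues i) := by
  have hmul : Finset.univ.val.map (fun i => (hA.eigenvalues i : ℂ))
      = Finset.univ.val.map (fun i => (hB.eigenvalues i : ℂ)) := by
    rw [← my_eig_roots hA, ← my_eig_roots hB, h]
  have key : ∀ {C : Matrix n n ℂ} (hC : C.IsHermitian),
      ∑ i, Real.sqrt (hC.eigenvalues i)
        = ((Finset.univ.val.map (fun i => (hC.eigenvalues i : ℂ))).map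
            (fun z => Real.sqrt z.re)).sum := by
    intro C hC
    rw [Multiset.map_map]
    rw [show ((fun z : ℂ => Real.sqrt z.re) ∘ fun i => ((hC.eigenvalues i : ℝ) : ℂ))
        = fun i => Real.sqrt (hC.eigenvalues i) by funext i; simp]
    rfl
  rw [key hA, key hB, hmul]

lemma my_tgm_comm [LinearOrder n] {X Y : Matrix n n ℂ}
    (hX : X.PosSemidef) (hY : Y.PosSemidef) : tgm hX hY = tgm hY hX := by
  have hch : (hX.sqrt * Y * hX.sqrt).charpoly = (hY.sqrt * X * hY.sqrt).charpoly := by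
    have hA' : hX.sqrt * Y * hX.sqrt = (hX.sqrt * hY.sqrt) * (hY.sqrt * hX.sqrt) := by
      rw [show (hX.sqrt * hY.sqrt) * (hY.sqrt * hX.sqrt)
          = hX.sqrt * (hY.sqrt * hY.sqrt) * hX.sqrt by simp only [Matrix.mul_assoc],
        hY.sqrt_mul_self]
    have hB' : hY.sqrt * X * hY.sqrt = (hY.sqrt * hX.sqrt) * (hX.sqrt * hY.sqrt) := by
      rw [show (hY.sqrt * hX.sqrt) * (hX.sqrt * hY.sqrt)
          = hY.sqrt * (hX.sqrt * hX.sqrt) * hY.sqrt by simp only [Matrix.mul_assoc],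
        hX.sqrt_mul_self]
    rw [hA', hB', my_charpoly_mul_comm]
  have h1 : tgm hX hY
      = ∑ i, Real.sqrt ((sqrt_mul_mul_sqrt_posSemidef hX hY).1.eigenvalues i) :=
    my_trace_sqrt_re (sqrt_mul_mul_sqrt_posSemidef hX hY)
  have h2 : tgm hY hX
      = ∑ i, Real.sqrt ((sqrt_mul_mul_sqrt_posSemidef hY hX).1.eigenvalues i) :=
    my_trace_sqrt_re (sqrt_mul_mul_sqrt_posSemidef hY hX)
  exact h1.trans ((my_sum_sqrt_eig_eq _ _ hch).trans h2.symm)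

end TgmLemmas

/-- Monotonicity of `tgm` in both arguments with respect to the Loewner order. -/
theorem tgm_mono {ℓ : ℕ} {X X₁ Y Y₁ : Matrix (Fin ℓ) (Fin ℓ) ℂ}
    (hX : X.PosSemidef) (hX₁ : X₁.PosSemidef) (hY : Y.PosSemidef) (hY₁ : Y₁.PosSemidef)
    (hXle : (X₁ - X).PosSemidef) (hYle : (Y₁ - Y).PosSemidef) :
    tgm hX hY ≤ tgm hX₁ hY₁ := by
  calc tgm hX hY ≤ tgm hX hY₁ := my_tgm_mono_right hX hY hY₁ hYle
    _ = tgm hY₁ hX := my_tgm_comm hX hY₁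
    _ ≤ tgm hY₁ hX₁ := my_tgm_mono_right hY₁ hX hX₁ hXle
    _ = tgm hX₁ hY₁ := my_tgm_comm hY₁ hX₁
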